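/- Let 1 < α ≤ 2, h > 0, and let M ≥ 2 be an integer. Then the real (M−1)×(M−1) Toeplitz matrix C with entries C_{j,k} = h^{−α} c^α_{j−k} (for 1 ≤ j, k ≤ M−1) is symmetric and positive definite. -/

import Mathlib

/-- Fractional centered-difference coefficients
`c^α_s = (-1)^s Γ(α+1) / (Γ(α/2 − s + 1) · Γ(α/2 + s + 1))`.
(In Lean, division by zero is zero, matching the stated convention.) -/
noncomputable def cCoef (α : ℝ) (s : ℤ) : ℝ :=
  ((-1 : ℝ) ^ s) * Real.Gamma (α + 1) /
    (Real.Gamma (α / 2 - s + 1) * Real.Gamma (α / 2 + s + 1))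

noncomputable def vCoef (α : ℝ) (s : ℤ) : ℝ :=
  ((-1 : ℝ) ^ s) * Real.Gamma α /
    (Real.Gamma (α / 2 - s + 1) * Real.Gamma (α / 2 + s))

lemma gamma_sign (k : ℕ) : ∀ x : ℝ, -(k:ℝ) < x → x ≤ -(k:ℝ)+1 →
    0 ≤ (-1:ℝ)^k * Real.Gamma x := by
  induction k with
  | zero =>
    intro x h1 h2
    simp only [Nat.cast_zero, neg_zero] at h1
    simpa using (Real.Gamma_pos_of_pos h1).le
  | succ k ih =>
    intro x h1 h2
    by_cases hx : x = 0
    · simp [hx, Real.Gamma_zero]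
    · have hxneg : x < 0 := by
        have hle : x ≤ 0 := by
          have hk0 : (0:ℝ) ≤ (k:ℝ) := Nat.cast_nonneg k
          push_cast at h2; linarith
        exact lt_of_le_of_ne hle hx
      have h3 := ih (x+1) (by push_cast at h1 ⊢; linarith) (by push_cast at h2 ⊢; linarith)
      rw [Real.Gamma_add_one hx] at h3
      rw [pow_succ]
      nlinarith [h3, hxneg]

section signs
variable {α : ℝ}

lemma neg_one_zpow_add_one (k : ℕ) : ((-1:ℝ)) ^ ((k:ℤ)+1) = -((-1:ℝ))^k := by
  rw [zpow_add_one₀ (by norm_num : (-1:ℝ) ≠ 0), zpow_natCast]; ring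

lemma vCoef_nonpos (hα₁ : 1 < α) (hα₂ : α ≤ 2) {s : ℤ} (hs : 1 ≤ s) : vCoef α s ≤ 0 := by
  obtain ⟨k, rfl⟩ : ∃ k : ℕ, s = (k:ℤ) + 1 := ⟨(s-1).toNat, by omega⟩
  have hk0 : (0:ℝ) ≤ (k:ℝ) := Nat.cast_nonneg k
  have hγ : 0 ≤ (-1:ℝ)^k * Real.Gamma (α/2 - k) :=
    gamma_sign k _ (by linarith) (by linarith)
  have hG2 : 0 < Real.Gamma (α/2 + ((k:ℝ)+1)) :=
    Real.Gamma_pos_of_pos (by linarith)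
  have hA : 0 < Real.Gamma α := Real.Gamma_pos_of_pos (by linarith)
  have key : vCoef α ((k:ℤ)+1) =
      (((-1:ℝ)^k * Real.Gamma (α/2 - k)) * (-Real.Gamma α)) /
        ((Real.Gamma (α/2 - k))^2 * Real.Gamma (α/2 + ((k:ℝ)+1))) := by
    unfold vCoef
    rw [neg_one_zpow_add_one]
    push_cast
    rw [(by ring : α/2 - ((k:ℝ)+1) + 1 = α/2 - k)]
    rcases eq_or_ne (Real.Gamma (α/2 - k)) 0 with h0 | h0
    · rw [h0]; simp
    · rw [div_eq_div_iff (mul_ne_zero h0 hG2.ne') (by positivity)]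
      ring
  rw [key]
  exact div_nonpos_iff.mpr (Or.inr ⟨mul_nonpos_of_nonneg_of_nonpos hγ (by linarith),
    by positivity⟩)

lemma neg_one_zpow_negNat (m : ℕ) : ((-1:ℝ)) ^ (-(m:ℤ)) = (-1:ℝ)^m := by
  rw [zpow_neg, zpow_natCast, ← inv_pow, inv_neg, inv_one]

lemma vCoef_nonneg (hα₁ : 1 < α) (hα₂ : α ≤ 2) {s : ℤ} (hs : s ≤ 0) : 0 ≤ vCoef α s := by
  obtain ⟨m, rfl⟩ : ∃ m : ℕ, s = -(m:ℤ) := ⟨(-s).toNat, by omega⟩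
  have hm0 : (0:ℝ) ≤ (m:ℝ) := Nat.cast_nonneg m
  have hγ : 0 ≤ (-1:ℝ)^m * Real.Gamma (α/2 - m) :=
    gamma_sign m _ (by linarith) (by linarith)
  have hG2 : 0 < Real.Gamma (α/2 + (m:ℝ) + 1) := Real.Gamma_pos_of_pos (by linarith)
  have hA : 0 < Real.Gamma α := Real.Gamma_pos_of_pos (by linarith)
  have key : vCoef α (-(m:ℤ)) =
      (((-1:ℝ)^m * Real.Gamma (α/2 - m)) * Real.Gamma α) /
        ((Real.Gamma (α/2 - m))^2 * Real.Gamma (α/2 + (m:ℝ) + 1)) := by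
    unfold vCoef
    rw [neg_one_zpow_negNat]
    push_cast
    rw [(by ring : α/2 - -(m:ℝ) + 1 = α/2 + (m:ℝ) + 1),
        (by ring : α/2 + -(m:ℝ) = α/2 - (m:ℝ))]
    rcases eq_or_ne (Real.Gamma (α/2 - m)) 0 with h0 | h0
    · rw [h0]; simp
    · rw [div_eq_div_iff (mul_ne_zero hG2.ne' h0) (by positivity)]
      ring
  rw [key]
  exact div_nonneg (mul_nonneg hγ hA.le) (by positivity)

lemma vCoef_one_neg (hα₁ : 1 < α) (hα₂ : α ≤ 2) : vCoef α 1 < 0 := by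
  have h1 : 0 < Real.Gamma α := Real.Gamma_pos_of_pos (by linarith)
  have h2 : 0 < Real.Gamma (α/2) := Real.Gamma_pos_of_pos (by linarith)
  have h3 : 0 < Real.Gamma (α/2 + 1) := Real.Gamma_pos_of_pos (by linarith)
  have key : vCoef α 1 = -(Real.Gamma α / (Real.Gamma (α/2) * Real.Gamma (α/2 + 1))) := by
    unfold vCoef
    push_cast
    rw [zpow_one, (by ring : α/2 - 1 + 1 = α/2)]
    ring
  rw [key]
  have : 0 < Real.Gamma α / (Real.Gamma (α/2) * Real.Gamma (α/2 + 1)) := by positivity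
  linarith

lemma cCoef_nonpos (hα₁ : 1 < α) (hα₂ : α ≤ 2) {s : ℤ} (hs : 1 ≤ s) : cCoef α s ≤ 0 := by
  obtain ⟨k, rfl⟩ : ∃ k : ℕ, s = (k:ℤ) + 1 := ⟨(s-1).toNat, by omega⟩
  have hk0 : (0:ℝ) ≤ (k:ℝ) := Nat.cast_nonneg k
  have hγ : 0 ≤ (-1:ℝ)^k * Real.Gamma (α/2 - k) :=
    gamma_sign k _ (by linarith) (by linarith)
  have hG2 : 0 < Real.Gamma (α/2 + ((k:ℝ)+1) + 1) :=
    Real.Gamma_pos_of_pos (by linarith)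
  have hA : 0 < Real.Gamma (α+1) := Real.Gamma_pos_of_pos (by linarith)
  have key : cCoef α ((k:ℤ)+1) =
      (((-1:ℝ)^k * Real.Gamma (α/2 - k)) * (-Real.Gamma (α+1))) /
        ((Real.Gamma (α/2 - k))^2 * Real.Gamma (α/2 + ((k:ℝ)+1) + 1)) := by
    unfold cCoef
    rw [neg_one_zpow_add_one]
    push_cast
    rw [(by ring : α/2 - ((k:ℝ)+1) + 1 = α/2 - k)]
    rcases eq_or_ne (Real.Gamma (α/2 - k)) 0 with h0 | h0
    · rw [h0]; simp
    · rw [div_eq_div_iff (mul_ne_zero h0 hG2.ne') (by positivity)]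
      ring
  rw [key]
  exact div_nonpos_iff.mpr (Or.inr ⟨mul_nonpos_of_nonneg_of_nonpos hγ (by linarith),
    by positivity⟩)

lemma cCoef_neg_eq (α : ℝ) (s : ℤ) : cCoef α (-s) = cCoef α s := by
  unfold cCoef
  rw [zpow_neg, ← inv_zpow, inv_neg, inv_one]
  push_cast
  ring_nf

lemma cCoef_one_neg (hα₁ : 1 < α) (hα₂ : α ≤ 2) : cCoef α 1 < 0 := by
  have h1 : 0 < Real.Gamma (α+1) := Real.Gamma_pos_of_pos (by linarith)
  have h2 : 0 < Real.Gamma (α/2) := Real.Gamma_pos_of_pos (by linarith)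
  have h3 : 0 < Real.Gamma (α/2 + 2) := Real.Gamma_pos_of_pos (by linarith)
  have key : cCoef α 1 = -(Real.Gamma (α+1) / (Real.Gamma (α/2) * Real.Gamma (α/2 + 2))) := by
    unfold cCoef
    push_cast
    rw [zpow_one, (by ring : α/2 - 1 + 1 = α/2), (by ring : α/2 + 1 + 1 = α/2 + 2)]
    ring
  rw [key]
  have : 0 < Real.Gamma (α+1) / (Real.Gamma (α/2) * Real.Gamma (α/2 + 2)) := by positivity
  linarith

end signs
lemma gamma_int_nonpos_eq_zero {z : ℤ} (hz : z ≤ 0) : Real.Gamma (z:ℝ) = 0 := by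
  obtain ⟨m, rfl⟩ : ∃ m : ℕ, z = -(m:ℤ) := ⟨(-z).toNat, by omega⟩
  push_cast
  exact Real.Gamma_neg_nat_eq_zero m

lemma gamma_three : Real.Gamma 3 = 2 := by
  rw [(by norm_num : (3:ℝ) = 2 + 1), Real.Gamma_add_one (by norm_num), Real.Gamma_two]
  norm_num

lemma cCoef_telescope {α : ℝ} (hα₁ : 1 < α) (hα₂ : α ≤ 2) (s : ℤ) :
    cCoef α s = vCoef α s - vCoef α (s+1) := by
  rcases eq_or_lt_of_le hα₂ with h2 | h2
  · -- α = 2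
    subst h2
    have g2 : Real.Gamma 2 = 1 := Real.Gamma_two
    have g1 : Real.Gamma 1 = 1 := Real.Gamma_one
    rcases (by omega : s ≤ -2 ∨ s = -1 ∨ s = 0 ∨ s = 1 ∨ 2 ≤ s) with hs | hs | hs | hs | hs
    · unfold cCoef vCoef
      rw [show (2:ℝ)/2 + (s:ℝ) + 1 = ((s+2:ℤ):ℝ) from by push_cast; ring,
          show (2:ℝ)/2 + (s:ℝ) = ((s+1:ℤ):ℝ) from by push_cast; ring,
          show (2:ℝ)/2 + ((s+1:ℤ):ℝ) = ((s+2:ℤ):ℝ) from by push_cast; ring,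
          gamma_int_nonpos_eq_zero (by omega : s+2 ≤ 0),
          gamma_int_nonpos_eq_zero (by omega : s+1 ≤ 0)]
      simp
    · subst hs
      unfold cCoef vCoef
      norm_num [g1, g2, gamma_three, Real.Gamma_zero]
    · subst hs
      unfold cCoef vCoef
      norm_num [g1, g2, gamma_three]
    · subst hs
      unfold cCoef vCoef
      norm_num [g1, g2, gamma_three, Real.Gamma_zero]
    · unfold cCoef vCoef
      rw [show (2:ℝ)/2 - (s:ℝ) + 1 = ((2-s:ℤ):ℝ) from by push_cast; ring,
          show (2:ℝ)/2 - ((s+1:ℤ):ℝ) + 1 = ((1-s:ℤ):ℝ) from by push_cast; ring,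
          gamma_int_nonpos_eq_zero (by omega : 2-s ≤ 0),
          gamma_int_nonpos_eq_zero (by omega : 1-s ≤ 0)]
      simp
  · -- α < 2
    have hnotint : ∀ t : ℤ, α/2 ≠ (t:ℝ) := by
      intro t ht
      rcases le_or_gt t 0 with h | h
      · have : (t:ℝ) ≤ 0 := by exact_mod_cast h
        linarith
      · have : (1:ℝ) ≤ (t:ℝ) := by exact_mod_cast h
        linarith
    have hx0 : α/2 - (s:ℝ) ≠ 0 := fun h => hnotint s (by linarith)
    have hy0 : α/2 + (s:ℝ) ≠ 0 := fun h => hnotint (-s) (by push_cast; linarith)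
    have hΓx : Real.Gamma (α/2 - (s:ℝ)) ≠ 0 := by
      apply Real.Gamma_ne_zero
      intro m h
      exact hnotint (s - m) (by push_cast; linarith)
    have hΓy : Real.Gamma (α/2 + (s:ℝ)) ≠ 0 := by
      apply Real.Gamma_ne_zero
      intro m h
      exact hnotint (-s - m) (by push_cast; linarith)
    have hα0 : α ≠ 0 := by linarith
    unfold cCoef vCoef
    push_cast
    rw [show α/2 - ((s:ℝ)+1) + 1 = α/2 - (s:ℝ) from by ring,
        show α/2 + ((s:ℝ)+1) = α/2 + (s:ℝ) + 1 from by ring,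
        Real.Gamma_add_one hα0, Real.Gamma_add_one hx0, Real.Gamma_add_one hy0,
        zpow_add_one₀ (by norm_num : (-1:ℝ) ≠ 0)]
    rw [div_sub_div _ _ (mul_ne_zero (mul_ne_zero hx0 hΓx) hΓy)
        (mul_ne_zero hΓx (mul_ne_zero hy0 hΓy)),
      div_eq_div_iff (mul_ne_zero (mul_ne_zero hx0 hΓx) (mul_ne_zero hy0 hΓy))
        (mul_ne_zero (mul_ne_zero (mul_ne_zero hx0 hΓx) hΓy)
          (mul_ne_zero hΓx (mul_ne_zero hy0 hΓy)))]
    ring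

lemma cCoef_nonpos' {α : ℝ} (hα₁ : 1 < α) (hα₂ : α ≤ 2) {s : ℤ} (hs : s ≠ 0) :
    cCoef α s ≤ 0 := by
  rcases lt_or_gt_of_ne hs with h | h
  · rw [show s = -(-s) from by ring, cCoef_neg_eq]
    exact cCoef_nonpos hα₁ hα₂ (by omega)
  · exact cCoef_nonpos hα₁ hα₂ (by omega)

lemma rowsum {α : ℝ} (hα₁ : 1 < α) (hα₂ : α ≤ 2) (n : ℕ) (j : ℤ) :
    ∑ i ∈ Finset.range n, cCoef α (j - i) = vCoef α (j - n + 1) - vCoef α (j + 1) := by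
  have key : ∀ i ∈ Finset.range n, cCoef α (j - i) =
      (fun i : ℕ => vCoef α (j - i + 1)) (i+1) - (fun i : ℕ => vCoef α (j - i + 1)) i := by
    intro i _
    simp only
    rw [cCoef_telescope hα₁ hα₂ (j - i),
        show j - ((i:ℕ)+1:ℕ) + 1 = j - i from by push_cast; ring]
  rw [Finset.sum_congr rfl key, Finset.sum_range_sub (fun i : ℕ => vCoef α (j - i + 1)) n]
  norm_num

lemma rowsum_nonneg {α : ℝ} (hα₁ : 1 < α) (hα₂ : α ≤ 2) {n : ℕ} (j : ℕ) (hj : j < n) :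
    0 ≤ ∑ i ∈ Finset.range n, cCoef α (j - i) := by
  rw [rowsum hα₁ hα₂]
  have h1 : 0 ≤ vCoef α ((j:ℤ) - n + 1) := vCoef_nonneg hα₁ hα₂ (by omega)
  have h2 : vCoef α ((j:ℤ) + 1) ≤ 0 := vCoef_nonpos hα₁ hα₂ (by omega)
  linarith

lemma rowsum_zero_pos {α : ℝ} (hα₁ : 1 < α) (hα₂ : α ≤ 2) {n : ℕ} (hn : 1 ≤ n) :
    0 < ∑ i ∈ Finset.range n, cCoef α ((0:ℤ) - i) := by
  rw [rowsum hα₁ hα₂]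
  have h1 : 0 ≤ vCoef α ((0:ℤ) - n + 1) := vCoef_nonneg hα₁ hα₂ (by omega)
  have h2 : vCoef α ((0:ℤ) + 1) < 0 := by
    simpa using vCoef_one_neg hα₁ hα₂
  linarith

lemma quad_identity {n : ℕ} (c : ℤ → ℝ) (hsym : ∀ s, c (-s) = c s) (x : Fin n → ℝ) :
    2 * (∑ j : Fin n, ∑ k : Fin n, c ((j:ℤ)-(k:ℤ)) * x j * x k)
      = (∑ j : Fin n, ∑ k : Fin n, (-(c ((j:ℤ)-(k:ℤ)))) * (x j - x k)^2)
        + 2 * ∑ j : Fin n, (∑ k : Fin n, c ((j:ℤ)-(k:ℤ))) * (x j)^2 := by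
  have swap : ∑ j : Fin n, ∑ k : Fin n, c ((j:ℤ)-(k:ℤ)) * (x k)^2
      = ∑ j : Fin n, ∑ k : Fin n, c ((j:ℤ)-(k:ℤ)) * (x j)^2 := by
    rw [Finset.sum_comm]
    refine Finset.sum_congr rfl fun a _ => Finset.sum_congr rfl fun b _ => ?_
    rw [show (b:ℤ)-(a:ℤ) = -((a:ℤ)-(b:ℤ)) from by ring, hsym]
  have expand : ∀ j k : Fin n, (-(c ((j:ℤ)-(k:ℤ)))) * (x j - x k)^2
      = -(c ((j:ℤ)-(k:ℤ)) * (x j)^2) + -(c ((j:ℤ)-(k:ℤ)) * (x k)^2)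
        + 2*(c ((j:ℤ)-(k:ℤ)) * x j * x k) := fun j k => by ring
  simp only [expand, Finset.sum_add_distrib, Finset.sum_neg_distrib, ← Finset.mul_sum,
    Finset.sum_mul]
  linarith [swap]

lemma quad_pos {α : ℝ} (hα₁ : 1 < α) (hα₂ : α ≤ 2) {n : ℕ} (hn : 1 ≤ n)
    (x : Fin n → ℝ) (hx : x ≠ 0) :
    0 < ∑ j : Fin n, ∑ k : Fin n, cCoef α ((j:ℤ)-(k:ℤ)) * x j * x k := by
  by_contra hS0
  push_neg at hS0
  set c : ℤ → ℝ := cCoef α with hc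
  have hsym : ∀ s, c (-s) = c s := cCoef_neg_eq α
  have hid := quad_identity c hsym x
  have hAterm : ∀ j k : Fin n, 0 ≤ (-(c ((j:ℤ)-(k:ℤ)))) * (x j - x k)^2 := by
    intro j k
    rcases eq_or_ne j k with rfl | hne
    · simp
    · have hv : (j:ℕ) ≠ (k:ℕ) := fun hh => hne (Fin.ext hh)
      have hz : (j:ℤ) - (k:ℤ) ≠ 0 := by omega
      have h1 := cCoef_nonpos' hα₁ hα₂ hz
      have h2 : (0:ℝ) ≤ (x j - x k)^2 := sq_nonneg _
      rw [hc]
      nlinarith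
  have hA0 : 0 ≤ ∑ j : Fin n, ∑ k : Fin n, (-(c ((j:ℤ)-(k:ℤ)))) * (x j - x k)^2 :=
    Finset.sum_nonneg fun j _ => Finset.sum_nonneg fun k _ => hAterm j k
  have hrow : ∀ j : Fin n, (∑ k : Fin n, c ((j:ℤ)-(k:ℤ)))
      = ∑ i ∈ Finset.range n, cCoef α ((j:ℕ) - (i:ℤ)) := by
    intro j
    exact Fin.sum_univ_eq_sum_range (fun i : ℕ => cCoef α ((j:ℕ) - (i:ℤ))) n
  have hrow0 : ∀ j : Fin n, 0 ≤ ∑ k : Fin n, c ((j:ℤ)-(k:ℤ)) := by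
    intro j
    rw [hrow j]
    exact rowsum_nonneg hα₁ hα₂ (j:ℕ) j.isLt
  have hBterm : ∀ j : Fin n, 0 ≤ (∑ k : Fin n, c ((j:ℤ)-(k:ℤ))) * (x j)^2 :=
    fun j => mul_nonneg (hrow0 j) (sq_nonneg _)
  have hB0 : 0 ≤ ∑ j : Fin n, (∑ k : Fin n, c ((j:ℤ)-(k:ℤ))) * (x j)^2 :=
    Finset.sum_nonneg fun j _ => hBterm j
  -- both parts must vanish
  have hAz : (∑ j : Fin n, ∑ k : Fin n, (-(c ((j:ℤ)-(k:ℤ)))) * (x j - x k)^2) = 0 := by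
    linarith
  have hBz : (∑ j : Fin n, (∑ k : Fin n, c ((j:ℤ)-(k:ℤ))) * (x j)^2) = 0 := by
    linarith
  -- x 0 = 0
  have z0 : Fin n := ⟨0, by omega⟩
  have hBzero := (Finset.sum_eq_zero_iff_of_nonneg (fun j _ => hBterm j)).1 hBz
      ⟨0, by omega⟩ (Finset.mem_univ _)
  have hrpos : 0 < ∑ k : Fin n, c (((⟨0, by omega⟩ : Fin n):ℤ)-(k:ℤ)) := by
    rw [hrow ⟨0, by omega⟩]
    have : (((⟨0, by omega⟩ : Fin n):ℕ):ℤ) = (0:ℤ) := by simp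
    rw [this]
    exact rowsum_zero_pos hα₁ hα₂ hn
  have hx0 : x ⟨0, by omega⟩ = 0 := by
    have h2 : (x ⟨0, by omega⟩)^2 = 0 := by
      by_contra hne
      have : 0 < (x ⟨0, by omega⟩)^2 := lt_of_le_of_ne (sq_nonneg _) (Ne.symm hne)
      nlinarith
    exact pow_eq_zero_iff (by norm_num) |>.1 h2
  -- all A terms vanish
  have hAterms : ∀ j k : Fin n, (-(c ((j:ℤ)-(k:ℤ)))) * (x j - x k)^2 = 0 := by
    intro j k
    have h1 := (Finset.sum_eq_zero_iff_of_nonneg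
      (fun j _ => Finset.sum_nonneg fun k _ => hAterm j k)).1 hAz j (Finset.mem_univ _)
    exact (Finset.sum_eq_zero_iff_of_nonneg (fun k _ => hAterm j k)).1 h1 k (Finset.mem_univ _)
  -- adjacent entries equal
  have hstep : ∀ i : ℕ, ∀ hi : i + 1 < n, x ⟨i+1, hi⟩ = x ⟨i, by omega⟩ := by
    intro i hi
    have hdiff : ((⟨i+1, hi⟩ : Fin n):ℤ) - ((⟨i, by omega⟩ : Fin n):ℤ) = 1 := by
      simp
    have := hAterms ⟨i+1, hi⟩ ⟨i, by omega⟩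
    rw [hdiff] at this
    have hc1 : c 1 < 0 := cCoef_one_neg hα₁ hα₂
    have hsq : (x ⟨i+1, hi⟩ - x ⟨i, by omega⟩)^2 = 0 := by
      rcases mul_eq_zero.1 this with h | h
      · exfalso; linarith
      · exact h
    have := pow_eq_zero_iff (n := 2) (by norm_num) |>.1 hsq
    linarith [this]
  have hall : ∀ i : ℕ, ∀ hi : i < n, x ⟨i, hi⟩ = 0 := by
    intro i
    induction i with
    | zero => intro hi; exact hx0
    | succ i ih =>
      intro hi
      have hi' : i < n := by omega
      rw [hstep i hi]
      exact ih hi'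
  exact hx (funext fun j => hall (j:ℕ) j.isLt)

/-- For `1 < α ≤ 2`, `h > 0` and `M ≥ 2`, the `(M−1)×(M−1)` Toeplitz matrix
`C_{j,k} = h^{−α} c^α_{j−k}` is symmetric and positive definite. -/
theorem toeplitz_cCoef_posdef (α h : ℝ) (hα₁ : 1 < α) (hα₂ : α ≤ 2) (hh : 0 < h)
    (M : ℕ) (hM : 2 ≤ M)
    (C : Matrix (Fin (M - 1)) (Fin (M - 1)) ℝ)
    (hC : ∀ j k : Fin (M - 1), C j k = h ^ (-α) * cCoef α ((j : ℤ) - (k : ℤ))) :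
    C.IsSymm ∧ C.PosDef := by
  have hn : 1 ≤ M - 1 := by omega
  have hsym : C.IsSymm := by
    rw [Matrix.IsSymm]
    ext j k
    rw [Matrix.transpose_apply, hC, hC,
      show (k:ℤ) - (j:ℤ) = -((j:ℤ)-(k:ℤ)) from by ring, cCoef_neg_eq]
  refine ⟨hsym, Matrix.posDef_iff_dotProduct_mulVec.mpr ⟨?_, ?_⟩⟩
  · ext j k
    rw [Matrix.conjTranspose_apply, star_trivial]
    exact congrFun (congrFun hsym j) k
  · intro x hx
    have hform : dotProduct (star x) (C.mulVec x)
        = h^(-α) * ∑ j : Fin (M-1), ∑ k : Fin (M-1), cCoef α ((j:ℤ)-(k:ℤ)) * x j * x k := by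
      simp only [dotProduct, Matrix.mulVec, Pi.star_apply, star_trivial, hC]
      rw [Finset.mul_sum]
      refine Finset.sum_congr rfl fun j _ => ?_
      rw [Finset.mul_sum, Finset.mul_sum]
      exact Finset.sum_congr rfl fun k _ => by ring
    rw [hform]
    have hq := quad_pos hα₁ hα₂ hn x hx
    have hpow : 0 < h ^ (-α) := Real.rpow_pos_of_pos hh _
    exact mul_pos hpow hq
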